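/- arXiv:math/0209100 — 3 statements merged into one kernel-verified Lean document; each statement's English description precedes it below -/
import Mathlib

section
/- Let M be an ordinary matroid on [n]. Then B is the maximal basis of M under a linear order ≤ on [n] if and only if Φ(B) is the maximal basis of Φ(M) under the Gale order induced by any D_n-admissible order extending ≤. -/
/-- `J n` models `[n] ∪ [n]*` : the element `(i, false)` is `i` and `(i, true)` is `i*`. -/
abbrev J (n : ℕ) := Fin n × Bool

/-- The star involution `i ↦ i*`, `i* ↦ i`. -/
def jstar {n : ℕ} (x : J n) : J n := (x.1, !x.2)

/-- `K* = { k* : k ∈ K }`. -/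
def starSet {n : ℕ} (K : Finset (J n)) : Finset (J n) := K.image jstar

/-- A subset `K ⊆ [n] ∪ [n]*` is admissible if `K ∩ K* = ∅`. -/
def Admissible {n : ℕ} (K : Finset (J n)) : Prop := K ∩ starSet K = ∅

/-- Gale order: `A ≤ B` iff there is an injection of `A` into `B` increasing each element. -/
def GaleLE {α : Type*} (r : α → α → Prop) (A B : Finset α) : Prop :=
  ∃ f : α → α, Set.InjOn f A ∧ (∀ a ∈ A, f a ∈ B) ∧ ∀ a ∈ A, r a (f a)

/-- A `Dₙ`-admissible ordering of `[n] ∪ [n]*`: a partial order reversed by `*`,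
linear except that the middle two elements (a pair `{i, i*}`) are incomparable. -/
structure DnOrder (n : ℕ) where
  le : J n → J n → Prop
  refl : ∀ i, le i i
  trans : ∀ i j k, le i j → le j k → le i k
  antisymm : ∀ i j, le i j → le j i → i = j
  star_anti : ∀ i j, le i j → le (jstar j) (jstar i)
  almost_total : ∀ i j : J n, le i j ∨ le j i ∨ j = jstar i
  middle : ∃ i : J n, ¬ le i (jstar i) ∧ ¬ le (jstar i) i

/-- `ℬ` is the collection of bases of a matroid of rank `k` on `[n]`. -/
def MatroidBases {n : ℕ} (k : ℕ) (ℬ : Set (Finset (Fin n))) : Prop :=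
  ℬ.Nonempty ∧ (∀ B ∈ ℬ, B.card = k) ∧
    ∀ A ∈ ℬ, ∀ B ∈ ℬ, ∀ a ∈ A \ B, ∃ b ∈ B \ A, insert b (A.erase a) ∈ ℬ

/-- `Φ(B) = B ∪ ([n] \ B)*`. -/
def Phi {n : ℕ} (B : Finset (Fin n)) : Finset (J n) :=
  B.image (fun i => (i, false)) ∪ Bᶜ.image (fun i => (i, true))

section helpers

variable {α : Type*}

lemma exists_max_rel [DecidableEq α] (r : α → α → Prop)
    (htrans : ∀ a b c, r a b → r b c → r a c)
    (htot : ∀ a b, r a b ∨ r b a) :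
    ∀ s : Finset α, s.Nonempty → ∃ m ∈ s, ∀ i ∈ s, r i m := by
  intro s
  induction s using Finset.induction_on with
  | empty => rintro ⟨x, hx⟩; simp at hx
  | @insert a0 s' ha0 ih =>
    intro _
    rcases s'.eq_empty_or_nonempty with h0 | hne
    · subst h0
      refine ⟨a0, by simp, ?_⟩
      intro i hi
      simp at hi
      subst hi
      rcases htot i i with h | h <;> exact h
    · obtain ⟨m, hm, hmax⟩ := ih hne
      rcases htot a0 m with hh | hh
      · refine ⟨m, by simp [hm], ?_⟩
        intro i hi
        rcases Finset.mem_insert.1 hi with rfl | hi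
        · exact hh
        · exact hmax i hi
      · refine ⟨a0, by simp, ?_⟩
        intro i hi
        rcases Finset.mem_insert.1 hi with rfl | hi
        · rcases htot i i with h' | h' <;> exact h'
        · exact htrans _ _ _ (hmax i hi) hh

lemma count_mono [DecidableEq α] (r : α → α → Prop) {A B : Finset α} {f : α → α}
    (hinj : Set.InjOn f A) (hfB : ∀ a ∈ A, f a ∈ B) (hfr : ∀ a ∈ A, r a (f a))
    (p : α → Prop) [DecidablePred p] (hp : ∀ a b, p a → r a b → p b) :
    (A.filter p).card ≤ (B.filter p).card := by
  apply Finset.card_le_card_of_injOn f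
  · intro a ha
    rw [Finset.mem_coe, Finset.mem_filter] at ha ⊢
    exact ⟨hfB a ha.1, hp a (f a) ha.2 (hfr a ha.1)⟩
  · exact hinj.mono (Finset.coe_subset.2 (Finset.filter_subset p A))

lemma gale_of_counts [Fintype α] [DecidableEq α] (r : α → α → Prop) [DecidableRel r]
    (htrans : ∀ a b c, r a b → r b c → r a c)
    (htot : ∀ a b, r a b ∨ r b a) (A B : Finset α)
    (hc : ∀ t ∈ A, (A.filter (fun x => r t x)).card ≤ (B.filter (fun x => r t x)).card) :
    ∃ f : α → α, Set.InjOn f A ∧ (∀ a ∈ A, f a ∈ B) ∧ ∀ a ∈ A, r a (f a) := by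
  have hall : ∀ s : Finset {x // x ∈ A},
      s.card ≤ (s.biUnion (fun a => B.filter (fun x => r a.1 x))).card := by
    intro s
    rcases s.eq_empty_or_nonempty with rfl | hs
    · simp
    · obtain ⟨mm, hmm, hmax⟩ := exists_max_rel (fun x y : {x // x ∈ A} => r y.1 x.1)
        (fun a b c hab hbc => htrans c.1 b.1 a.1 hbc hab) (fun a b => htot b.1 a.1) s hs
      calc s.card ≤ (A.filter (fun x => r mm.1 x)).card := by
              apply Finset.card_le_card_of_injOn (fun x => x.1)
              · intro b hb
                rw [Finset.mem_coe, Finset.mem_filter]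
                exact ⟨b.2, hmax b hb⟩
              · intro x _ y _ hxy
                exact Subtype.ext hxy
        _ ≤ (B.filter (fun x => r mm.1 x)).card := hc mm.1 mm.2
        _ ≤ _ := Finset.card_le_card
              (Finset.subset_biUnion_of_mem (fun a => B.filter (fun x => r a.1 x)) hmm)
  obtain ⟨f0, hf0inj, hf0mem⟩ := (Finset.all_card_le_biUnion_card_iff_exists_injective _).1 hall
  refine ⟨fun x => if h : x ∈ A then f0 ⟨x, h⟩ else x, ?_, ?_, ?_⟩
  · intro x hx y hy hxy
    rw [Finset.mem_coe] at hx hy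
    simp only [dif_pos hx, dif_pos hy] at hxy
    exact congrArg Subtype.val (hf0inj hxy)
  · intro a ha
    simp only [dif_pos ha]
    exact (Finset.mem_filter.1 (hf0mem ⟨a, ha⟩)).1
  · intro a ha
    simp only [dif_pos ha]
    exact (Finset.mem_filter.1 (hf0mem ⟨a, ha⟩)).2

end helpers

lemma mem_Phi {n : ℕ} (A : Finset (Fin n)) (x : J n) :
    x ∈ Phi A ↔ (x.2 = false ∧ x.1 ∈ A) ∨ (x.2 = true ∧ x.1 ∉ A) := by
  obtain ⟨i, b⟩ := x
  cases b <;> simp [Phi, Prod.ext_iff, eq_comm]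

open Classical in
lemma phi_filter_card {n : ℕ} (A : Finset (Fin n)) (p : Fin n → Prop) :
    ((Phi A).filter (fun x : J n => x.2 = true ∨ (x.2 = false ∧ p x.1))).card
      = Aᶜ.card + (A.filter p).card := by
  have hset : (Phi A).filter (fun x : J n => x.2 = true ∨ (x.2 = false ∧ p x.1))
      = Aᶜ.image (fun i => (i, true)) ∪ (A.filter p).image (fun i => (i, false)) := by
    ext ⟨i, b⟩
    simp only [Finset.mem_filter, mem_Phi, Finset.mem_union, Finset.mem_image,
      Finset.mem_compl, Prod.mk.injEq]
    cases b <;> simp <;> tauto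
  rw [hset, Finset.card_union_of_disjoint, Finset.card_image_of_injective,
    Finset.card_image_of_injective]
  · intro a b hab
    exact (Prod.ext_iff.1 hab).1
  · intro a b hab
    exact (Prod.ext_iff.1 hab).1
  · rw [Finset.disjoint_left]
    rintro ⟨i, bb⟩ h1 h2
    simp only [Finset.mem_image] at h1 h2
    obtain ⟨a1, _, ha1⟩ := h1
    obtain ⟨a2, _, ha2⟩ := h2
    rw [← ha2] at ha1
    simpa using (Prod.ext_iff.1 ha1).2

def dnRel {n : ℕ} (ro : Fin n → Fin n → Prop) (m : Fin n) : J n → J n → Prop := fun x y =>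
  match x.2, y.2 with
  | false, false => ro x.1 y.1
  | true, true => ro y.1 x.1
  | false, true => ¬(x.1 = m ∧ y.1 = m)
  | true, false => False

/-- `B` is the maximal basis of a matroid `M` under a linear order `≤` on
`[n]` iff `Φ(B)` is the maximal basis of `Φ(M)` under the Gale order induced by any
`Dₙ`-admissible order extending `≤`. -/
theorem max_basis_iff_phi_max (n k : ℕ) (ℬ : Set (Finset (Fin n))) (h : MatroidBases k ℬ)
    (ro : Fin n → Fin n → Prop) (hro : IsLinearOrder (Fin n) ro)
    (B : Finset (Fin n)) (hB : B ∈ ℬ) :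
    (∀ A ∈ ℬ, GaleLE ro A B) ↔
      ∀ d : DnOrder n, (∀ i j : Fin n, d.le (i, false) (j, false) ↔ ro i j) →
        ∀ A ∈ ℬ, GaleLE d.le (Phi A) (Phi B) := by
  classical
  haveI := hro
  have hrefl : ∀ a, ro a a := fun a => Std.Refl.refl a
  have htrans : ∀ a b c, ro a b → ro b c → ro a c := fun a b c => IsTrans.trans a b c
  have hanti : ∀ a b, ro a b → ro b a → a = b := fun a b => Std.Antisymm.antisymm a b
  have htot : ∀ a b, ro a b ∨ ro b a := fun a b => Std.Total.total a b
  have hcard := h.2.1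
  constructor
  · -- forward
    intro hmax d hd A hA
    obtain ⟨f, hfi, hfB, hfr⟩ := hmax A hA
    have hAB : A.card = B.card := by rw [hcard A hA, hcard B hB]
    have hcc : ∀ t, ((Aᶜ).filter (fun x => ro x t)).card
        ≤ ((Bᶜ).filter (fun x => ro x t)).card := by
      intro t
      have h1 : (A.filter (fun x => ¬ ro x t)).card ≤ (B.filter (fun x => ¬ ro x t)).card :=
        count_mono ro hfi hfB hfr _ (fun a b hpa hab hbt => hpa (htrans a b t hab hbt))
      have h2 := Finset.card_filter_add_card_filter_not (s := A)
        (p := fun x => ro x t)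
      have h3 := Finset.card_filter_add_card_filter_not (s := B)
        (p := fun x => ro x t)
      have h4 : (A.filter (fun x => ro x t)).card + ((Aᶜ).filter (fun x => ro x t)).card
          = (Finset.univ.filter (fun x => ro x t)).card := by
        rw [← Finset.card_union_of_disjoint
          (Finset.disjoint_filter_filter disjoint_compl_right),
          ← Finset.filter_union, Finset.union_compl]
      have h5 : (B.filter (fun x => ro x t)).card + ((Bᶜ).filter (fun x => ro x t)).card
          = (Finset.univ.filter (fun x => ro x t)).card := by
        rw [← Finset.card_union_of_disjoint
          (Finset.disjoint_filter_filter disjoint_compl_right),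
          ← Finset.filter_union, Finset.union_compl]
      omega
    obtain ⟨g, hgi, hgB, hgr⟩ := gale_of_counts (fun a b => ro b a)
      (fun a b c hab hbc => htrans c b a hbc hab) (fun a b => htot b a) Aᶜ Bᶜ
      (fun t _ => hcc t)
    refine ⟨fun x : J n => match x.2 with
      | false => (f x.1, false)
      | true => (g x.1, true), ?_, ?_, ?_⟩
    · rintro ⟨i, bi⟩ hx ⟨j, bj⟩ hy hxy
      rw [Finset.mem_coe, mem_Phi] at hx hy
      simp only at hx hy
      cases bi <;> cases bj
      · have hiA : i ∈ A := by tauto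
        have hjA : j ∈ A := by tauto
        have : f i = f j := (Prod.ext_iff.1 hxy).1
        rw [hfi hiA hjA this]
      · simpa using (Prod.ext_iff.1 hxy).2
      · simpa using (Prod.ext_iff.1 hxy).2
      · have hiA : i ∈ (Aᶜ : Finset (Fin n)) := Finset.mem_compl.2 (by tauto)
        have hjA : j ∈ (Aᶜ : Finset (Fin n)) := Finset.mem_compl.2 (by tauto)
        have : g i = g j := (Prod.ext_iff.1 hxy).1
        rw [hgi hiA hjA this]
    · rintro ⟨i, bi⟩ hx
      rw [mem_Phi] at hx
      simp only at hx
      cases bi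
      · have hiA : i ∈ A := by tauto
        exact (mem_Phi B _).2 (Or.inl ⟨rfl, hfB i hiA⟩)
      · have hiA : i ∈ (Aᶜ : Finset (Fin n)) := Finset.mem_compl.2 (by tauto)
        exact (mem_Phi B _).2 (Or.inr ⟨rfl, Finset.mem_compl.1 (hgB i hiA)⟩)
    · rintro ⟨i, bi⟩ hx
      rw [mem_Phi] at hx
      simp only at hx
      cases bi
      · have hiA : i ∈ A := by tauto
        exact (hd i (f i)).2 (hfr i hiA)
      · have hiA : i ∈ (Aᶜ : Finset (Fin n)) := Finset.mem_compl.2 (by tauto)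
        have h1 : d.le (g i, false) (i, false) := (hd (g i) i).2 (hgr i hiA)
        exact d.star_anti _ _ h1
  · -- backward
    intro hphi A hA
    by_cases hn : n = 0
    · subst hn
      exact ⟨id, fun x _ y _ hxy => hxy, fun a _ => a.elim0, fun a _ => a.elim0⟩
    · obtain ⟨m, -, hm'⟩ := exists_max_rel ro htrans htot Finset.univ
        ⟨⟨0, Nat.pos_of_ne_zero hn⟩, Finset.mem_univ _⟩
      have hm : ∀ i, ro i m := fun i => hm' i (Finset.mem_univ i)
      have drefl : ∀ x : J n, dnRel ro m x x := by
        rintro ⟨i, b⟩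
        cases b
        · exact hrefl i
        · exact hrefl i
      have dtrans : ∀ x y z : J n, dnRel ro m x y → dnRel ro m y z → dnRel ro m x z := by
        rintro ⟨i, bi⟩ ⟨j, bj⟩ ⟨kk, bk⟩ h1 h2
        cases bi <;> cases bj <;> cases bk
        · exact htrans i j kk h1 h2
        · intro hcon
          exact h2 ⟨hanti j m (hm j) (hcon.1 ▸ h1), hcon.2⟩
        · exact h2.elim
        · intro hcon
          exact h1 ⟨hcon.1, hanti j m (hm j) (hcon.2 ▸ h2)⟩
        · exact h1.elim
        · exact h1.elim
        · exact h2.elim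
        · exact htrans kk j i h2 h1
      have danti : ∀ x y : J n, dnRel ro m x y → dnRel ro m y x → x = y := by
        rintro ⟨i, bi⟩ ⟨j, bj⟩ h1 h2
        cases bi <;> cases bj
        · rw [hanti i j h1 h2]
        · exact h2.elim
        · exact h1.elim
        · rw [hanti i j h2 h1]
      have dstar : ∀ x y : J n, dnRel ro m x y → dnRel ro m (jstar y) (jstar x) := by
        rintro ⟨i, bi⟩ ⟨j, bj⟩ h1
        cases bi <;> cases bj
        · exact h1
        · exact fun hc => h1 ⟨hc.2, hc.1⟩
        · exact h1.elim
        · exact h1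
      have dtot : ∀ x y : J n, dnRel ro m x y ∨ dnRel ro m y x ∨ y = jstar x := by
        rintro ⟨i, bi⟩ ⟨j, bj⟩
        cases bi <;> cases bj
        · rcases htot i j with hh | hh
          · exact Or.inl hh
          · exact Or.inr (Or.inl hh)
        · by_cases hc : i = m ∧ j = m
          · refine Or.inr (Or.inr ?_)
            rw [hc.1, hc.2]
            exact rfl
          · exact Or.inl hc
        · by_cases hc : j = m ∧ i = m
          · refine Or.inr (Or.inr ?_)
            rw [hc.1, hc.2]
            exact rfl
          · exact Or.inr (Or.inl hc)
        · rcases htot j i with hh | hh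
          · exact Or.inl hh
          · exact Or.inr (Or.inl hh)
      have dmid : ∃ x : J n, ¬ dnRel ro m x (jstar x) ∧ ¬ dnRel ro m (jstar x) x :=
        ⟨(m, false), fun hcon => hcon ⟨rfl, rfl⟩, fun hcon => hcon⟩
      obtain ⟨F, hFi, hFm, hFl⟩ := hphi ⟨dnRel ro m, drefl, dtrans, danti, dstar, dtot, dmid⟩
        (fun i j => Iff.rfl) A hA
      have hcount : ∀ t, (A.filter (fun x => ro t x)).card ≤ (B.filter (fun x => ro t x)).card := by
        intro t
        have hS : ∀ x y : J n, (x.2 = true ∨ (x.2 = false ∧ ro t x.1)) → dnRel ro m x y →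
            (y.2 = true ∨ (y.2 = false ∧ ro t y.1)) := by
          rintro ⟨i, bi⟩ ⟨j, bj⟩ hx hxy
          cases bi <;> cases bj
          · refine Or.inr ⟨rfl, ?_⟩
            rcases hx with hx | hx
            · exact absurd hx (by simp)
            · exact htrans t i j hx.2 hxy
          · exact Or.inl rfl
          · exact hxy.elim
          · exact Or.inl rfl
        have hmono := count_mono (dnRel ro m) hFi hFm hFl
          (fun x : J n => x.2 = true ∨ (x.2 = false ∧ ro t x.1)) hS
        rw [phi_filter_card A (fun i => ro t i), phi_filter_card B (fun i => ro t i)] at hmono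
        have hAc : (Aᶜ : Finset (Fin n)).card = (Bᶜ : Finset (Fin n)).card := by
          rw [Finset.card_compl, Finset.card_compl, hcard A hA, hcard B hB]
        omega
      exact gale_of_counts ro htrans htot A B (fun t _ => hcount t)
end

section
/- Let M_1, M_2 be matroids on [n] of ranks k and k−1 respectively. If M_2 is not a quotient of M_1, then there exists a D_n-admissible order on [n] ∪ [n]* under which the maximal bases of Φ(M_1) and Φ(M_2) do not have symmetric difference of the form {i, i*}; hence Φ(M_1) and Φ(M_2) are not a Lagrangian pair. -/
/-- `M₂` is a quotient of `M₁`: for every linear order on `[n]`, the Gale-maximal basis of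
`M₂` is contained in the Gale-maximal basis of `M₁`. -/
def IsQuotient {n : ℕ} (ℬ₁ ℬ₂ : Set (Finset (Fin n))) : Prop :=
  ∀ ro : Fin n → Fin n → Prop, IsLinearOrder (Fin n) ro →
    ∀ B₁ ∈ ℬ₁, ∀ B₂ ∈ ℬ₂,
      (∀ A ∈ ℬ₁, GaleLE ro A B₁) → (∀ A ∈ ℬ₂, GaleLE ro A B₂) → B₂ ⊆ B₁

section Aux

variable {α : Type*}

/-- Minimum of a nonempty finset with respect to a total transitive relation. -/
lemma exists_rel_min [DecidableEq α] (r : α → α → Prop) (htot : ∀ a b, r a b ∨ r b a)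
    (htr : ∀ a b c, r a b → r b c → r a c) :
    ∀ s : Finset α, s.Nonempty → ∃ m ∈ s, ∀ a ∈ s, r m a := by
  intro s
  induction s using Finset.strongInduction with
  | _ s ih =>
    intro hs
    obtain ⟨x, hx⟩ := hs
    rcases (s.erase x).eq_empty_or_nonempty with h | h
    · refine ⟨x, hx, ?_⟩
      intro a ha
      rcases eq_or_ne a x with rfl | hne
      · exact (htot a a).elim id id
      · exact absurd (Finset.mem_erase.2 ⟨hne, ha⟩) (h ▸ Finset.notMem_empty a)
    · obtain ⟨m, hm, hmin⟩ := ih (s.erase x) (Finset.erase_ssubset hx) h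
      rcases htot x m with hxm | hmx
      · refine ⟨x, hx, fun a ha => ?_⟩
        rcases eq_or_ne a x with rfl | hne
        · exact (htot a a).elim id id
        · exact htr _ _ _ hxm (hmin a (Finset.mem_erase.2 ⟨hne, ha⟩))
      · refine ⟨m, Finset.mem_of_mem_erase hm, fun a ha => ?_⟩
        rcases eq_or_ne a x with rfl | hne
        · exact hmx
        · exact hmin a (Finset.mem_erase.2 ⟨hne, ha⟩)

/-- A self-map of a finset which permutes it and is inflationary must be the identity. -/
lemma perm_fix [DecidableEq α] (r : α → α → Prop) (htot : ∀ a b, r a b ∨ r b a)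
    (htr : ∀ a b c, r a b → r b c → r a c) (hanti : ∀ a b, r a b → r b a → a = b)
    (s : Finset α) :
    ∀ τ : α → α, Set.InjOn τ s → s.image τ = s →
      (∀ a ∈ s, r a (τ a)) → ∀ a ∈ s, τ a = a := by
  induction s using Finset.strongInduction with
  | _ s ih =>
    intro τ hinj himg hle a ha
    obtain ⟨M, hM, hMmax⟩ :=
      exists_rel_min (fun a b => r b a) (fun a b => (htot b a))
        (fun a b c h1 h2 => htr _ _ _ h2 h1) s ⟨a, ha⟩
    have hτM : τ M ∈ s := himg ▸ Finset.mem_image_of_mem τ hM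
    have hMfix : τ M = M := hanti _ _ (hMmax _ hτM) (hle M hM)
    by_cases haM : a = M
    · rw [haM, hMfix]
    · have hsub : s.erase M ⊂ s := Finset.erase_ssubset hM
      have hinj' : Set.InjOn τ (s.erase M) :=
        hinj.mono (fun x hx => Finset.mem_coe.2
          (Finset.mem_of_mem_erase (Finset.mem_coe.1 hx)))
      have himg' : (s.erase M).image τ = s.erase M := by
        apply Finset.eq_of_subset_of_card_le
        · intro x hx
          simp only [Finset.mem_image] at hx
          obtain ⟨b, hb, rfl⟩ := hx
          have hbs := Finset.mem_of_mem_erase hb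
          refine Finset.mem_erase.2 ⟨?_, himg ▸ Finset.mem_image_of_mem τ hbs⟩
          intro h
          exact (Finset.mem_erase.1 hb).1 (hinj hbs hM (h.trans hMfix.symm))
        · rw [Finset.card_image_of_injOn hinj']
      exact ih _ hsub τ hinj' himg'
        (fun x hx => hle x (Finset.mem_of_mem_erase hx)) a
        (Finset.mem_erase.2 ⟨haM, ha⟩)

/-- Antisymmetry of the Gale order among sets of the same cardinality. -/
lemma gale_antisymm [DecidableEq α] (r : α → α → Prop) (htot : ∀ a b, r a b ∨ r b a)
    (htr : ∀ a b c, r a b → r b c → r a c) (hanti : ∀ a b, r a b → r b a → a = b)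
    (A B : Finset α) (hAB : GaleLE r A B) (hBA : GaleLE r B A)
    (hcard : A.card = B.card) : A = B := by
  obtain ⟨f, hfinj, hfmem, hfle⟩ := hAB
  obtain ⟨g, hginj, hgmem, hgle⟩ := hBA
  have hfim : A.image f = B := by
    apply Finset.eq_of_subset_of_card_le
    · intro x hx
      obtain ⟨a, ha, rfl⟩ := Finset.mem_image.1 hx
      exact hfmem a ha
    · rw [Finset.card_image_of_injOn hfinj, hcard]
  have hgim : B.image g = A := by
    apply Finset.eq_of_subset_of_card_le
    · intro x hx
      obtain ⟨b, hb, rfl⟩ := Finset.mem_image.1 hx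
      exact hgmem b hb
    · rw [Finset.card_image_of_injOn hginj, hcard]
  have hinj : Set.InjOn (g ∘ f) A := by
    intro a ha a' ha' h
    exact hfinj ha ha' (hginj (hfmem a ha) (hfmem a' ha') h)
  have himg : A.image (g ∘ f) = A := by
    rw [← Finset.image_image, hfim, hgim]
  have hfix : ∀ a ∈ A, g (f a) = a := by
    intro a ha
    exact perm_fix r htot htr hanti A (g ∘ f) hinj himg
      (fun x hx => htr _ _ _ (hfle x hx) (hgle _ (hfmem x hx))) a ha
  have hfid : ∀ a ∈ A, f a = a := by
    intro a ha
    have h1 : r (f a) (g (f a)) := hgle _ (hfmem a ha)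
    rw [hfix a ha] at h1
    exact (hanti _ _ (hfle a ha) h1).symm
  rw [← hfim]
  ext x
  simp only [Finset.mem_image]
  constructor
  · intro hx
    exact ⟨x, hx, hfid x hx⟩
  · rintro ⟨a, ha, rfl⟩
    rw [hfid a ha]; exact ha

end Aux

section PhiLemmas

lemma mem_Phi_false {n : ℕ} {B : Finset (Fin n)} {i : Fin n} :
    (i, false) ∈ Phi B ↔ i ∈ B := by
  simp [Phi, Prod.ext_iff]

lemma mem_Phi_true {n : ℕ} {B : Finset (Fin n)} {i : Fin n} :
    (i, true) ∈ Phi B ↔ i ∉ B := by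
  simp [Phi, Prod.ext_iff]

end PhiLemmas

/-- The Dₙ-admissible order built from a linear order `ro` with minimum `m`:
`iₙ* < ⋯ < i₂* < {i₁*, i₁} < i₂ < ⋯ < iₙ` where `i₁ = m` is `ro`-minimal. -/
def dle {n : ℕ} (ro : Fin n → Fin n → Prop) (m : Fin n) : J n → J n → Prop
  | (i, false), (j, false) => ro i j
  | (i, true), (j, true) => ro j i
  | (i, true), (j, false) => ¬(i = m ∧ j = m)
  | (_, false), (_, true) => False

@[simp] lemma dle_ff {n : ℕ} {ro : Fin n → Fin n → Prop} {m i j : Fin n} :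
    dle ro m (i, false) (j, false) ↔ ro i j := Iff.rfl
@[simp] lemma dle_tt {n : ℕ} {ro : Fin n → Fin n → Prop} {m i j : Fin n} :
    dle ro m (i, true) (j, true) ↔ ro j i := Iff.rfl
@[simp] lemma dle_tf {n : ℕ} {ro : Fin n → Fin n → Prop} {m i j : Fin n} :
    dle ro m (i, true) (j, false) ↔ ¬(i = m ∧ j = m) := Iff.rfl
@[simp] lemma dle_ft {n : ℕ} {ro : Fin n → Fin n → Prop} {m i j : Fin n} :
    dle ro m (i, false) (j, true) ↔ False := Iff.rfl

/-- `dle ro m` is a `Dₙ`-admissible order when `ro` is linear and `m` is its minimum. -/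
def dnOrderOf {n : ℕ} (ro : Fin n → Fin n → Prop)
    (htot : ∀ a b, ro a b ∨ ro b a)
    (htr : ∀ a b c, ro a b → ro b c → ro a c)
    (hanti : ∀ a b, ro a b → ro b a → a = b)
    (m : Fin n) (hm : ∀ a, ro m a) : DnOrder n where
  le := dle ro m
  refl := by
    rintro ⟨i, b⟩
    have : ro i i := (htot i i).elim id id
    cases b <;> simpa using this
  trans := by
    rintro ⟨i, bi⟩ ⟨j, bj⟩ ⟨l, bl⟩ h1 h2
    cases bi <;> cases bj <;> cases bl <;>
      simp only [dle_ff, dle_tt, dle_tf, dle_ft] at h1 h2 ⊢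
    · exact htr _ _ _ h1 h2
    · rintro ⟨rfl, rfl⟩
      exact h1 ⟨rfl, hanti _ _ h2 (hm j)⟩
    · rintro ⟨rfl, rfl⟩
      exact h2 ⟨hanti _ _ h1 (hm j), rfl⟩
    · exact htr _ _ _ h2 h1
  antisymm := by
    rintro ⟨i, bi⟩ ⟨j, bj⟩ h1 h2
    cases bi <;> cases bj <;>
      simp only [dle_ff, dle_tt, dle_tf, dle_ft] at h1 h2
    · exact Prod.ext_iff.2 ⟨hanti _ _ h1 h2, rfl⟩
    · exact Prod.ext_iff.2 ⟨hanti _ _ h2 h1, rfl⟩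
  star_anti := by
    rintro ⟨i, bi⟩ ⟨j, bj⟩ h
    cases bi <;> cases bj <;>
      simp only [jstar, Bool.not_false, Bool.not_true, dle_ff, dle_tt, dle_tf,
        dle_ft] at h ⊢
    · exact h
    · rintro ⟨h1, h2⟩
      exact h ⟨h2, h1⟩
    · exact h
  almost_total := by
    rintro ⟨i, bi⟩ ⟨j, bj⟩
    cases bi <;> cases bj
    · rcases htot i j with h | h
      · exact Or.inl h
      · exact Or.inr (Or.inl h)
    · by_cases h : j = m ∧ i = m
      · refine Or.inr (Or.inr ?_)
        simp [jstar, h.1, h.2]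
      · exact Or.inr (Or.inl h)
    · by_cases h : i = m ∧ j = m
      · refine Or.inr (Or.inr ?_)
        simp [jstar, h.1, h.2]
      · exact Or.inl h
    · rcases htot j i with h | h
      · exact Or.inl h
      · exact Or.inr (Or.inl h)
  middle := ⟨(m, false), by simp [jstar], by simp [jstar]⟩

/-- if `M₂` (rank `k - 1`) is not a quotient of `M₁` (rank `k`), then there
is a `Dₙ`-admissible order under which the maximal bases of `Φ(M₁)` and `Φ(M₂)` do not
have symmetric difference `{i, i*}`; hence `Φ(M₁)`, `Φ(M₂)` are not a Lagrangian pair. -/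
theorem not_quotient_implies_not_lagrangian_pair (n k : ℕ) (hk : 1 ≤ k)
    (ℬ₁ ℬ₂ : Set (Finset (Fin n)))
    (h₁ : MatroidBases k ℬ₁) (h₂ : MatroidBases (k - 1) ℬ₂)
    (hq : ¬ IsQuotient ℬ₁ ℬ₂) :
    ∃ d : DnOrder n, ∀ C₁ C₂ : Finset (J n),
      C₁ ∈ Phi '' ℬ₁ → C₂ ∈ Phi '' ℬ₂ →
      (∀ C ∈ Phi '' ℬ₁, GaleLE d.le C C₁) →
      (∀ C ∈ Phi '' ℬ₂, GaleLE d.le C C₂) →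
      ¬ ∃ i : J n, symmDiff C₁ C₂ = {i, jstar i} := by
  classical
  rw [IsQuotient] at hq
  push_neg at hq
  obtain ⟨ro, hlin, B₁, hB₁, B₂, hB₂, hmax₁, hmax₂, hns⟩ := hq
  haveI := hlin
  have htot : ∀ a b : Fin n, ro a b ∨ ro b a := fun a b => total_of ro a b
  have htr : ∀ a b c : Fin n, ro a b → ro b c → ro a c :=
    fun a b c => trans_of ro
  have hanti : ∀ a b : Fin n, ro a b → ro b a → a = b :=
    fun a b => antisymm_of ro
  -- `Fin n` is nonempty
  obtain ⟨B0, hB0⟩ := h₁.1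
  have hB0ne : B0.Nonempty := by
    rw [← Finset.card_pos, h₁.2.1 B0 hB0]; omega
  obtain ⟨i0, -⟩ := hB0ne
  obtain ⟨m, -, hm'⟩ :=
    exists_rel_min ro htot htr Finset.univ ⟨i0, Finset.mem_univ i0⟩
  have hm : ∀ a, ro m a := fun a => hm' a (Finset.mem_univ a)
  refine ⟨dnOrderOf ro htot htr hanti m hm, ?_⟩
  rintro C₁ C₂ ⟨B₁', hB₁', rfl⟩ ⟨B₂', hB₂', rfl⟩ hmaxd₁ hmaxd₂ ⟨i, hsd⟩
  -- Gale domination for the Dₙ order implies Gale domination for `ro`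
  have conv : ∀ A B : Finset (Fin n), GaleLE (dle ro m) (Phi A) (Phi B) →
      GaleLE ro A B := by
    rintro A B ⟨f, hfinj, hfmem, hfle⟩
    have hsnd : ∀ a ∈ A, (f (a, false)).2 = false := by
      intro a ha
      have hle := hfle (a, false) (mem_Phi_false.2 ha)
      obtain ⟨j, c, hjc⟩ : ∃ j c, f (a, false) = (j, c) := ⟨_, _, rfl⟩
      rw [hjc]
      cases c
      · rfl
      · rw [hjc] at hle
        exact (dle_ft.1 hle).elim
    refine ⟨fun a => (f (a, false)).1, ?_, ?_, ?_⟩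
    · intro a ha a' ha' h
      have heq : f (a, false) = f (a', false) := by
        have e1 : f (a, false) = ((f (a, false)).1, (f (a, false)).2) := rfl
        have e2 : f (a', false) = ((f (a', false)).1, (f (a', false)).2) := rfl
        have h' : (f (a, false)).1 = (f (a', false)).1 := h
        rw [e1, e2, hsnd a ha, hsnd a' ha', h']
      have := hfinj (Finset.mem_coe.2 (mem_Phi_false.2 ha))
        (Finset.mem_coe.2 (mem_Phi_false.2 ha')) heq
      exact (Prod.ext_iff.1 this).1
    · intro a ha
      have hmem := hfmem (a, false) (mem_Phi_false.2 ha)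
      have e1 : f (a, false) = ((f (a, false)).1, (f (a, false)).2) := rfl
      rw [e1, hsnd a ha] at hmem
      exact mem_Phi_false.1 hmem
    · intro a ha
      have hle := hfle (a, false) (mem_Phi_false.2 ha)
      have e1 : f (a, false) = ((f (a, false)).1, (f (a, false)).2) := rfl
      rw [e1, hsnd a ha] at hle
      exact dle_ff.1 hle
  -- the Dₙ-maximal bases coincide with the `ro`-maximal witnesses
  have e1 : B₁' = B₁ := by
    have hle1 : GaleLE ro B₁ B₁' := conv _ _ (hmaxd₁ (Phi B₁) ⟨B₁, hB₁, rfl⟩)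
    have hle2 : GaleLE ro B₁' B₁ := hmax₁ B₁' hB₁'
    exact gale_antisymm ro htot htr hanti B₁' B₁ hle2 hle1
      ((h₁.2.1 B₁' hB₁').trans (h₁.2.1 B₁ hB₁).symm)
  have e2 : B₂' = B₂ := by
    have hle1 : GaleLE ro B₂ B₂' := conv _ _ (hmaxd₂ (Phi B₂) ⟨B₂, hB₂, rfl⟩)
    have hle2 : GaleLE ro B₂' B₂ := hmax₂ B₂' hB₂'
    exact gale_antisymm ro htot htr hanti B₂' B₂ hle2 hle1
      ((h₂.2.1 B₂' hB₂').trans (h₂.2.1 B₂ hB₂).symm)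
  -- from the symmetric difference condition, deduce `B₂' ⊆ B₁'`
  have hkey : ∀ x, x ∈ symmDiff B₁' B₂' → x = i.1 := by
    intro x hx
    have hx' : (x, false) ∈ symmDiff (Phi B₁') (Phi B₂') := by
      rw [Finset.mem_symmDiff] at hx ⊢
      rcases hx with ⟨ha, hb⟩ | ⟨ha, hb⟩
      · exact Or.inl ⟨mem_Phi_false.2 ha, fun h => hb (mem_Phi_false.1 h)⟩
      · exact Or.inr ⟨mem_Phi_false.2 ha, fun h => hb (mem_Phi_false.1 h)⟩
    rw [hsd] at hx'
    rcases Finset.mem_insert.1 hx' with h | h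
    · exact (Prod.ext_iff.1 h).1
    · exact (Prod.ext_iff.1 (Finset.mem_singleton.1 h)).1
  have hsubset : B₂' ⊆ B₁' := by
    intro x hx2
    by_contra hx1
    have hxs : x ∈ symmDiff B₁' B₂' := Finset.mem_symmDiff.2 (Or.inr ⟨hx2, hx1⟩)
    have hxi := hkey x hxs
    have hsub : B₁' ⊆ B₂' := by
      intro y hy1
      by_contra hy2
      have hys : y ∈ symmDiff B₁' B₂' := Finset.mem_symmDiff.2 (Or.inl ⟨hy1, hy2⟩)
      have hyi := hkey y hys
      exact hx1 (by rw [hxi, ← hyi]; exact hy1)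
    have hc := Finset.card_le_card hsub
    rw [h₁.2.1 B₁' hB₁', h₂.2.1 B₂' hB₂'] at hc
    omega
  exact hns (e2 ▸ e1 ▸ hsubset)
end

section
/- Let B be the collection of bases of a Lagrangian orthogonal matroid on [n] ∪ [n]* satisfying the Strong Exchange Property, and fix i ∈ [n]. Define B_1 = {B \ {i} : i ∈ B, B ∈ 𝔅} and B_2 = {B \ {i*} : i* ∈ B, B ∈ 𝔅}. If both B_1 and B_2 are nonempty, then each of B_1 and B_2 satisfies the Strong Exchange Property on ([n] ∪ [n]*) \ {i, i*}. -/
/-- The Strong Exchange Property for a collection of subsets of `[n] ∪ [n]*`. -/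
def StrongExchange {n : ℕ} (𝔅 : Set (Finset (J n))) : Prop :=
  ∀ A ∈ 𝔅, ∀ C ∈ 𝔅, ∀ a ∈ symmDiff A C, ∃ b ∈ C \ A, b ≠ jstar a ∧
    symmDiff A {a, b, jstar a, jstar b} ∈ 𝔅 ∧ symmDiff C {a, b, jstar a, jstar b} ∈ 𝔅

lemma jstar_jstar {n : ℕ} (x : J n) : jstar (jstar x) = x := by
  simp [jstar]

lemma star_notMem {n : ℕ} {K : Finset (J n)} (h : Admissible K) {x : J n}
    (hx : x ∈ K) : jstar x ∉ K := by
  intro hmem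
  have : jstar x ∈ K ∩ starSet K := Finset.mem_inter.mpr ⟨hmem,
    Finset.mem_image.mpr ⟨x, hx, rfl⟩⟩
  rw [h] at this
  exact absurd this (Finset.notMem_empty _)

lemma aux_se {n : ℕ} (𝔅 : Set (Finset (J n)))
    (hadm : ∀ B ∈ 𝔅, Admissible B) (hSE : StrongExchange 𝔅) (e : J n) :
    StrongExchange {A | ∃ B ∈ 𝔅, e ∈ B ∧ A = B.erase e} := by
  rintro A' ⟨A, hA, heA, rfl⟩ C' ⟨C, hC, heC, rfl⟩ a ha
  have hstarA : jstar e ∉ A := star_notMem (hadm A hA) heA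
  have hstarC : jstar e ∉ C := star_notMem (hadm C hC) heC
  have hane : a ≠ e := by
    rcases Finset.mem_symmDiff.mp ha with ⟨h1, _⟩ | ⟨h1, _⟩ <;>
      exact (Finset.mem_erase.mp h1).1
  have haAC : a ∈ symmDiff A C := by
    rcases Finset.mem_symmDiff.mp ha with ⟨h1, h2⟩ | ⟨h1, h2⟩
    · exact Finset.mem_symmDiff.mpr (Or.inl ⟨(Finset.mem_erase.mp h1).2,
        fun hc => h2 (Finset.mem_erase.mpr ⟨hane, hc⟩)⟩)
    · exact Finset.mem_symmDiff.mpr (Or.inr ⟨(Finset.mem_erase.mp h1).2,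
        fun hc => h2 (Finset.mem_erase.mpr ⟨hane, hc⟩)⟩)
  obtain ⟨b, hb, hba, hAS, hCS⟩ := hSE A hA C hC a haAC
  obtain ⟨hbC, hbA⟩ := Finset.mem_sdiff.mp hb
  have hbne : b ≠ e := fun h => hbA (h ▸ heA)
  have haAorC : a ∈ A ∨ a ∈ C := by
    rcases Finset.mem_symmDiff.mp haAC with ⟨h1, _⟩ | ⟨h1, _⟩
    exacts [Or.inl h1, Or.inr h1]
  have hastar : jstar a ≠ e := by
    intro h
    have : a = jstar e := by rw [← h, jstar_jstar]
    rcases haAorC with h' | h' <;> [exact hstarA (this ▸ h'); exact hstarC (this ▸ h')]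
  have hbstar : jstar b ≠ e := by
    intro h
    have : b = jstar e := by rw [← h, jstar_jstar]
    exact hstarC (this ▸ hbC)
  have heS : e ∉ ({a, b, jstar a, jstar b} : Finset (J n)) := by
    simp only [Finset.mem_insert, Finset.mem_singleton]
    push_neg
    exact ⟨fun h => hane h.symm, fun h => hbne h.symm,
      fun h => hastar h.symm, fun h => hbstar h.symm⟩
  set S : Finset (J n) := {a, b, jstar a, jstar b} with hSdef
  have key : ∀ (X : Finset (J n)), e ∈ X →
      symmDiff (X.erase e) S = (symmDiff X S).erase e := by
    intro X heX
    ext x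
    by_cases hx : x = e
    · subst hx
      simp [Finset.mem_symmDiff, heS, heX]
    · simp [Finset.mem_symmDiff, Finset.mem_erase, hx]
  refine ⟨b, Finset.mem_sdiff.mpr ⟨Finset.mem_erase.mpr ⟨hbne, hbC⟩,
      fun h => hbA (Finset.mem_erase.mp h).2⟩, hba, ?_, ?_⟩
  · exact ⟨symmDiff A S, hAS,
      Finset.mem_symmDiff.mpr (Or.inl ⟨heA, heS⟩), key A heA⟩
  · exact ⟨symmDiff C S, hCS,
      Finset.mem_symmDiff.mpr (Or.inl ⟨heC, heS⟩), key C heC⟩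

/-- deleting `i` (resp. `i*`) from the bases containing it yields two
collections `𝔅₁`, `𝔅₂`; if both are nonempty, each satisfies the Strong Exchange
Property (on `([n] ∪ [n]*) \ {i, i*}`). -/
theorem contraction_strong_exchange (n : ℕ) (𝔅 : Set (Finset (J n)))
    (hadm : ∀ B ∈ 𝔅, Admissible B ∧ B.card = n)
    (hSE : StrongExchange 𝔅) (i : Fin n)
    (𝔅₁ 𝔅₂ : Set (Finset (J n)))
    (h₁ : 𝔅₁ = {A | ∃ B ∈ 𝔅, (i, false) ∈ B ∧ A = B.erase (i, false)})
    (h₂ : 𝔅₂ = {A | ∃ B ∈ 𝔅, (i, true) ∈ B ∧ A = B.erase (i, true)})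
    (hne₁ : 𝔅₁.Nonempty) (hne₂ : 𝔅₂.Nonempty) :
    StrongExchange 𝔅₁ ∧ StrongExchange 𝔅₂ := by
  constructor
  · rw [h₁]; exact aux_se 𝔅 (fun B hB => (hadm B hB).1) hSE (i, false)
  · rw [h₂]; exact aux_se 𝔅 (fun B hB => (hadm B hB).1) hSE (i, true)
end
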